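/- Let V be a nonempty finite type, f : (V → ℝ) → ℝ a multi-affine function, and r the region determined by bounds a, b : V → ℝ with a x ≤ b x for all x ∈ V. Then there exist vertices v_min and v_max of r such that f v_min ≤ f u ≤ f v_max for every u ∈ r; i.e. a multi-affine function attains its maximum and minimum over a box at a vertex of the box. -/

import Mathlib

/-- A multi-affine function on valuations. -/
def MultiAffine {V : Type*} [DecidableEq V] (f : (V → ℝ) → ℝ) : Prop :=
  ∀ (x : V) (u : V → ℝ), ∃ c d : ℝ, ∀ t : ℝ, f (Function.update u x t) = c * t + d

/-- Membership of a valuation in the region with bounds `a`, `b`. -/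
def InRegion {V : Type*} (a b u : V → ℝ) : Prop := ∀ x, a x ≤ u x ∧ u x ≤ b x

/-- A vertex of the region with bounds `a`, `b`. -/
def IsVertex {V : Type*} (a b v : V → ℝ) : Prop := ∀ x, v x = a x ∨ v x = b x

private lemma aux_vertex_le {V : Type*} [Fintype V] [DecidableEq V]
    (f : (V → ℝ) → ℝ) (hf : MultiAffine f)
    (a b : V → ℝ) (u : V → ℝ) (hu : InRegion a b u) :
    ∃ v, IsVertex a b v ∧ f v ≤ f u := by
  have key : ∀ S : Finset V, ∀ u, InRegion a b u → ∃ u', InRegion a b u' ∧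
      (∀ x ∈ S, u' x = a x ∨ u' x = b x) ∧ f u' ≤ f u := by
    intro S
    induction S using Finset.induction_on with
    | empty => intro u hu; exact ⟨u, hu, by simp, le_refl _⟩
    | insert _ _ hx ih =>
      rename_i x S
      intro u hu
      obtain ⟨u', hu', hS, hle⟩ := ih u hu
      obtain ⟨c, d, hcd⟩ := hf x u'
      have hub : f (Function.update u' x (u' x)) = f u' := by
        rw [Function.update_eq_self]
      rcases le_or_gt 0 c with hc | hc
      · refine ⟨Function.update u' x (a x), ?_, ?_, ?_⟩
        · intro y
          rcases eq_or_ne y x with rfl | hy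
          · simp [Function.update_self]; exact (hu' y).1.trans (hu' y).2
          · simp [Function.update_of_ne hy]; exact hu' y
        · intro y hy
          rcases eq_or_ne y x with rfl | hyx
          · left; rw [Function.update_self]
          · rw [Function.update_of_ne hyx]; exact hS y (Finset.mem_insert.mp hy |>.resolve_left hyx)
        · calc f (Function.update u' x (a x)) = c * a x + d := hcd _
            _ ≤ c * u' x + d := by nlinarith [(hu' x).1]
            _ = f u' := by rw [← hcd (u' x), hub]
            _ ≤ f u := hle
      · refine ⟨Function.update u' x (b x), ?_, ?_, ?_⟩
        · intro y
          rcases eq_or_ne y x with rfl | hy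
          · simp [Function.update_self]; exact (hu' y).1.trans (hu' y).2
          · simp [Function.update_of_ne hy]; exact hu' y
        · intro y hy
          rcases eq_or_ne y x with rfl | hyx
          · right; rw [Function.update_self]
          · rw [Function.update_of_ne hyx]; exact hS y (Finset.mem_insert.mp hy |>.resolve_left hyx)
        · calc f (Function.update u' x (b x)) = c * b x + d := hcd _
            _ ≤ c * u' x + d := by nlinarith [(hu' x).2]
            _ = f u' := by rw [← hcd (u' x), hub]
            _ ≤ f u := hle
  obtain ⟨u', hu', hS, hle⟩ := key Finset.univ u hu
  exact ⟨u', fun x => hS x (Finset.mem_univ x), hle⟩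

theorem multiAffine_extrema_at_vertices
    {V : Type*} [Fintype V] [Nonempty V] [DecidableEq V]
    (f : (V → ℝ) → ℝ) (hf : MultiAffine f)
    (a b : V → ℝ) (hab : ∀ x, a x ≤ b x) :
    ∃ vmin vmax : V → ℝ, IsVertex a b vmin ∧ IsVertex a b vmax ∧
      ∀ u, InRegion a b u → f vmin ≤ f u ∧ f u ≤ f vmax := by
  classical
  have hfneg : MultiAffine (fun u => -f u) := by
    intro x u
    obtain ⟨c, d, h⟩ := hf x u
    exact ⟨-c, -d, fun t => by simp [h t]; ring⟩
  set g : (V → Bool) → (V → ℝ) := fun s x => if s x then b x else a x with hg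
  have hgv : ∀ s, IsVertex a b (g s) := by
    intro s x; by_cases h : s x <;> simp [hg, h]
  have hvert : ∀ v, IsVertex a b v → ∃ s, g s = v := by
    intro v hv
    refine ⟨fun x => if v x = a x then false else true, ?_⟩
    funext x
    rcases eq_or_ne (v x) (a x) with h' | h'
    · simp [hg, h']
    · have hb := (hv x).resolve_left h'
      simp [hg, h', hb]
      exact fun e => e.symm
  obtain ⟨smin, _, hmin⟩ := Finset.exists_min_image (Finset.univ : Finset (V → Bool))
    (fun s => f (g s)) ⟨fun _ => true, Finset.mem_univ _⟩
  obtain ⟨smax, _, hmax⟩ := Finset.exists_max_image (Finset.univ : Finset (V → Bool))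
    (fun s => f (g s)) ⟨fun _ => true, Finset.mem_univ _⟩
  refine ⟨g smin, g smax, hgv smin, hgv smax, fun u hu => ?_⟩
  constructor
  · obtain ⟨v, hv, hle⟩ := aux_vertex_le f hf a b u hu
    obtain ⟨s, rfl⟩ := hvert v hv
    exact (hmin s (Finset.mem_univ s)).trans hle
  · obtain ⟨v, hv, hle⟩ := aux_vertex_le (fun u => -f u) hfneg a b u hu
    obtain ⟨s, rfl⟩ := hvert v hv
    have h2 := hmax s (Finset.mem_univ s)
    have hle2 : -f (g s) ≤ -f u := hle
    linarith
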